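/- Let φ be a non-negative, nondecreasing function on (0, R₀] for some R₀ > 0. Suppose there exist non-negative constants A, B, α, β, ℓ with α > β such that φ(ρ) ≤ A(ρ/R)^α φ(R) + B R^β / (ln(R₀/R))^ℓ for all 0 < ρ ≤ R ≤ R₀. Then there exist γ₀ ∈ (β, α), τ ∈ (0,1), and c > 0, depending only on A, B, α, β, ℓ, such that φ(ρ) ≤ c (ρ/R)^{γ₀} (φ(R) + R^β / (ln(R₀/R))^ℓ) + c ρ^β / (ln(τ²R₀/ρ))^ℓ for all 0 < ρ ≤ R ≤ τ²R₀. -/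

import Mathlib

set_option maxHeartbeats 2000000 in
/-- Refined Campanato–Morrey iteration lemma with logarithmic correction. -/
theorem stmt0 (R₀ A B α β ℓ : ℝ) (hR₀ : 0 < R₀) (hA : 0 ≤ A) (hB : 0 ≤ B)
    (hβ : 0 ≤ β) (hℓ : 0 ≤ ℓ) (hαβ : β < α)
    (φ : ℝ → ℝ) (hφ0 : ∀ ρ, 0 < ρ → ρ ≤ R₀ → 0 ≤ φ ρ)
    (hφmono : ∀ ρ₁ ρ₂, 0 < ρ₁ → ρ₁ ≤ ρ₂ → ρ₂ ≤ R₀ → φ ρ₁ ≤ φ ρ₂)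
    (hineq : ∀ ρ R, 0 < ρ → ρ ≤ R → R ≤ R₀ →
      φ ρ ≤ A * (ρ / R) ^ α * φ R + B * R ^ β / (Real.log (R₀ / R)) ^ ℓ) :
    ∃ γ₀ τ c : ℝ, β < γ₀ ∧ γ₀ < α ∧ 0 < τ ∧ τ < 1 ∧ 0 < c ∧
      ∀ ρ R, 0 < ρ → ρ ≤ R → R ≤ τ ^ 2 * R₀ →
        φ ρ ≤ c * (ρ / R) ^ γ₀ * (φ R + R ^ β / (Real.log (R₀ / R)) ^ ℓ) +
          c * ρ ^ β / (Real.log (τ ^ 2 * R₀ / ρ)) ^ ℓ := by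
  classical
  have hexppos := Real.exp_pos ℓ
  have hexp1 : 1 ≤ Real.exp ℓ := Real.one_le_exp hℓ
  obtain ⟨γ₀, δ, hδ, hγβ, hγα, hγδ, hαγ⟩ :
      ∃ γ₀ δ : ℝ, 0 < δ ∧ β < γ₀ ∧ γ₀ < α ∧ γ₀ = β + δ ∧ α = γ₀ + δ :=
    ⟨(α + β) / 2, (α - β) / 2, by linarith, by linarith, by linarith, by ring, by ring⟩
  have hγ₀pos : 0 < γ₀ := lt_of_le_of_lt hβ hγβ
  obtain ⟨τ, hτpos, hτ1, hAτ, hexpτ⟩ :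
      ∃ τ : ℝ, 0 < τ ∧ τ < 1 ∧ A * τ ^ α ≤ τ ^ γ₀ ∧ Real.exp ℓ * τ ^ δ ≤ 1 / 2 := by
    set x₀ : ℝ := 1 / (2 * Real.exp ℓ * (A + 1)) with hx₀def
    have hx₀pos : 0 < x₀ := by rw [hx₀def]; positivity
    have hx₀lt1 : x₀ < 1 := by rw [hx₀def, div_lt_one (by positivity)]; nlinarith
    have hτpos : 0 < x₀ ^ (1 / δ) := Real.rpow_pos_of_pos hx₀pos _
    have hτδ : (x₀ ^ (1 / δ)) ^ δ = x₀ := by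
      rw [← Real.rpow_mul hx₀pos.le, one_div_mul_cancel hδ.ne', Real.rpow_one]
    refine ⟨x₀ ^ (1 / δ), hτpos,
      Real.rpow_lt_one hx₀pos.le hx₀lt1 (by positivity), ?_, ?_⟩
    · rw [hαγ, Real.rpow_add hτpos, hτδ]
      have h1 : A * x₀ ≤ 1 := by
        rw [hx₀def, mul_one_div, div_le_one (by positivity)]; nlinarith
      nlinarith [mul_le_mul_of_nonneg_left h1 (Real.rpow_pos_of_pos hτpos γ₀).le]
    · rw [hτδ, hx₀def, mul_one_div, div_le_div_iff₀ (by positivity) (by norm_num)]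
      nlinarith
  obtain ⟨c, hc, hcγ, hcB⟩ :
      ∃ c : ℝ, 0 < c ∧ τ ^ (-γ₀) ≤ c ∧
        2 * (2:ℝ) ^ ℓ * Real.exp (2 * ℓ) * B * τ ^ (-(2 * β)) ≤ c := by
    refine ⟨τ ^ (-γ₀) + 2 * (2:ℝ) ^ ℓ * Real.exp (2 * ℓ) * B * τ ^ (-(2 * β)) + 1,
      ?_, ?_, ?_⟩
    · have h1 : (0:ℝ) < τ ^ (-γ₀) := Real.rpow_pos_of_pos hτpos _
      have h2 : (0:ℝ) ≤ 2 * (2:ℝ) ^ ℓ * Real.exp (2 * ℓ) * B * τ ^ (-(2 * β)) := by positivity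
      linarith
    · have h2 : (0:ℝ) ≤ 2 * (2:ℝ) ^ ℓ * Real.exp (2 * ℓ) * B * τ ^ (-(2 * β)) := by positivity
      linarith
    · have h1 : (0:ℝ) < τ ^ (-γ₀) := Real.rpow_pos_of_pos hτpos _
      linarith
  refine ⟨γ₀, τ, c, hγβ, hγα, hτpos, hτ1, hc, ?_⟩
  intro ρ R hρ hρR hRle
  have hτsq : τ ^ 2 < 1 := by nlinarith
  have hτ2R₀ : τ ^ 2 * R₀ < R₀ := by nlinarith
  have hR : 0 < R := lt_of_lt_of_le hρ hρR
  have hRR₀ : R ≤ R₀ := le_trans hRle hτ2R₀.le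
  set L : ℝ := Real.log (R₀ / R) with hLdef
  set lmb : ℝ := -Real.log τ with hlmbdef
  have hlmb : 0 < lmb := by
    have := Real.log_neg hτpos hτ1; rw [hlmbdef]; linarith
  have hLlam : 2 * lmb ≤ L := by
    have h1 : (1:ℝ) / τ ^ 2 ≤ R₀ / R := by
      rw [div_le_div_iff₀ (by positivity) hR]; nlinarith
    have h2 : Real.log (1 / τ ^ 2) ≤ L := by
      rw [hLdef]; exact Real.log_le_log (by positivity) h1
    rw [one_div, Real.log_inv, Real.log_pow] at h2
    rw [hlmbdef]; push_cast at h2; linarith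
  have hL : 0 < L := lt_of_lt_of_le (by linarith) hLlam
  have hlog_arg : ∀ j : ℕ, Real.log (R₀ / (τ ^ j * R)) = L + j * lmb := by
    intro j
    rw [Real.log_div hR₀.ne' (by positivity), Real.log_mul (by positivity) hR.ne',
      Real.log_pow, hLdef, Real.log_div hR₀.ne' hR.ne', hlmbdef]
    ring
  -- the iteration
  have key : ∀ k : ℕ, φ (τ ^ k * R) ≤ τ ^ ((k : ℝ) * γ₀) * φ R +
      ∑ j ∈ Finset.range k,
        τ ^ (((k : ℝ) - 1 - (j : ℝ)) * γ₀) * (B * (τ ^ j * R) ^ β / (L + (j : ℝ) * lmb) ^ ℓ) := by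
    intro k
    induction k with
    | zero => simp
    | succ k ih =>
      have hτk : (0:ℝ) < τ ^ k * R := by positivity
      have hτk1 : (0:ℝ) < τ ^ (k + 1) * R := by positivity
      have hle : τ ^ (k + 1) * R ≤ τ ^ k * R :=
        mul_le_mul_of_nonneg_right
          (pow_le_pow_of_le_one hτpos.le hτ1.le (Nat.le_succ k)) hR.le
      have hleR₀ : τ ^ k * R ≤ R₀ := by
        have h1 : τ ^ k ≤ 1 := pow_le_one₀ hτpos.le hτ1.le
        have h2 : τ ^ k * R ≤ 1 * R := mul_le_mul_of_nonneg_right h1 hR.le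
        linarith
      have step := hineq (τ ^ (k + 1) * R) (τ ^ k * R) hτk1 hle hleR₀
      have hdiv : τ ^ (k + 1) * R / (τ ^ k * R) = τ := by
        rw [pow_succ]
        field_simp
      rw [hdiv, hlog_arg k] at step
      have hφk : 0 ≤ φ (τ ^ k * R) := hφ0 _ hτk hleR₀
      have h2 : A * τ ^ α * φ (τ ^ k * R) ≤ τ ^ γ₀ * φ (τ ^ k * R) :=
        mul_le_mul_of_nonneg_right hAτ hφk
      have h3 : τ ^ γ₀ * φ (τ ^ k * R) ≤ τ ^ γ₀ * (τ ^ ((k : ℝ) * γ₀) * φ R +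
          ∑ j ∈ Finset.range k, τ ^ (((k : ℝ) - 1 - (j : ℝ)) * γ₀) *
            (B * (τ ^ j * R) ^ β / (L + (j : ℝ) * lmb) ^ ℓ)) :=
        mul_le_mul_of_nonneg_left ih (Real.rpow_nonneg hτpos.le _)
      have hexp : τ ^ γ₀ * τ ^ ((k : ℝ) * γ₀) = τ ^ (((k:ℕ) + 1 : ℝ) * γ₀) := by
        rw [← Real.rpow_add hτpos]; congr 1; ring
      have hsum : τ ^ γ₀ * ∑ j ∈ Finset.range k, τ ^ (((k : ℝ) - 1 - (j : ℝ)) * γ₀) *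
            (B * (τ ^ j * R) ^ β / (L + (j : ℝ) * lmb) ^ ℓ)
          = ∑ j ∈ Finset.range k, τ ^ ((((k:ℕ) + 1 : ℝ) - 1 - (j : ℝ)) * γ₀) *
            (B * (τ ^ j * R) ^ β / (L + (j : ℝ) * lmb) ^ ℓ) := by
        rw [Finset.mul_sum]
        refine Finset.sum_congr rfl fun j hj => ?_
        rw [← mul_assoc, ← Real.rpow_add hτpos]
        congr 2
        ring
      calc φ (τ ^ (k + 1) * R)
          ≤ τ ^ γ₀ * φ (τ ^ k * R) + B * (τ ^ k * R) ^ β / (L + (k:ℝ) * lmb) ^ ℓ := by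
            linarith
        _ ≤ τ ^ γ₀ * (τ ^ ((k : ℝ) * γ₀) * φ R +
              ∑ j ∈ Finset.range k, τ ^ (((k : ℝ) - 1 - (j : ℝ)) * γ₀) *
                (B * (τ ^ j * R) ^ β / (L + (j : ℝ) * lmb) ^ ℓ))
              + B * (τ ^ k * R) ^ β / (L + (k:ℝ) * lmb) ^ ℓ := by linarith
        _ = τ ^ (((k:ℕ) + 1 : ℝ) * γ₀) * φ R +
              ∑ j ∈ Finset.range (k + 1), τ ^ ((((k:ℕ) + 1 : ℝ) - 1 - (j : ℝ)) * γ₀) *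
                (B * (τ ^ j * R) ^ β / (L + (j : ℝ) * lmb) ^ ℓ) := by
            have h0 : (((k:ℕ) + 1 : ℝ) - 1 - ((k:ℕ) : ℝ)) * γ₀ = 0 := by push_cast; ring
            rw [Finset.sum_range_succ, h0, Real.rpow_zero, ← hexp, ← hsum]
            ring
        _ = _ := by simp only [Nat.cast_add, Nat.cast_one]
  -- bound for the sum
  have sumbd : ∀ k : ℕ, 1 ≤ k →
      ∑ j ∈ Finset.range k,
        τ ^ (((k : ℝ) - 1 - (j : ℝ)) * γ₀) * (B * (τ ^ j * R) ^ β / (L + (j : ℝ) * lmb) ^ ℓ)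
      ≤ 2 * Real.exp (2 * ℓ) * B * (τ ^ (((k : ℝ) - 1) * β) * R ^ β) /
          (L + ((k : ℝ) - 2) * lmb) ^ ℓ := by
    intro k hk
    have hk1' : (1:ℝ) ≤ (k:ℝ) := by exact_mod_cast hk
    set D : ℝ := L + ((k : ℝ) - 2) * lmb with hDdef
    have hD : lmb ≤ D := by
      rw [hDdef]
      have := mul_nonneg (by linarith only [hk1'] : (0:ℝ) ≤ (k:ℝ) - 1) hlmb.le
      linarith only [this, hLlam, hlmb]
    have hDpos : 0 < D := lt_of_lt_of_le hlmb hD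
    set C : ℝ := Real.exp (2 * ℓ) * B * (τ ^ (((k : ℝ) - 1) * β) * R ^ β) / D ^ ℓ with hCdef
    have hCpos : 0 ≤ C := by
      rw [hCdef]
      have := Real.rpow_pos_of_pos hDpos ℓ
      positivity
    have hterm : ∀ j ∈ Finset.range k,
        τ ^ (((k : ℝ) - 1 - (j : ℝ)) * γ₀) * (B * (τ ^ j * R) ^ β / (L + (j : ℝ) * lmb) ^ ℓ)
        ≤ C * (1/2 : ℝ) ^ ((k : ℝ) - 1 - (j : ℝ)) := by
      intro j hj
      rw [Finset.mem_range] at hj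
      have hjk : (j:ℝ) ≤ (k:ℝ) - 1 := by
        have : ((j:ℝ) + 1) ≤ (k:ℝ) := by exact_mod_cast hj
        linarith only [this]
      have hi : 0 ≤ (k:ℝ) - 1 - (j:ℝ) := by linarith only [hjk]
      have hjr : (0:ℝ) ≤ (j:ℝ) := Nat.cast_nonneg j
      have hEpos : 0 < L + (j:ℝ) * lmb := by
        have := mul_nonneg hjr hlmb.le
        linarith only [this, hL]
      have hEℓpos : 0 < (L + (j:ℝ) * lmb) ^ ℓ := Real.rpow_pos_of_pos hEpos ℓ
      have hDℓpos : 0 < D ^ ℓ := Real.rpow_pos_of_pos hDpos ℓ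
      -- rewrite the power
      have e1 : (τ ^ j * R) ^ β = τ ^ ((j:ℝ) * β) * R ^ β := by
        rw [Real.mul_rpow (by positivity) hR.le, ← Real.rpow_natCast τ j,
          ← Real.rpow_mul hτpos.le]
      have e2 : τ ^ (((k:ℝ) - 1 - (j:ℝ)) * γ₀) * τ ^ ((j:ℝ) * β)
          = τ ^ (((k:ℝ) - 1) * β) * τ ^ (((k:ℝ) - 1 - (j:ℝ)) * δ) := by
        rw [← Real.rpow_add hτpos, ← Real.rpow_add hτpos, hγδ]
        ring_nf
      have hDle : D ≤ ((k:ℝ) - 1 - (j:ℝ) + 2) * (L + (j:ℝ) * lmb) := by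
        rw [hDdef]
        have p1 : (0:ℝ) ≤ ((k:ℝ) - (j:ℝ)) * (L - 2*lmb) :=
          mul_nonneg (by linarith only [hjk]) (by linarith only [hLlam])
        have p2 : (0:ℝ) ≤ ((k:ℝ) - (j:ℝ)) * ((j:ℝ) * lmb) :=
          mul_nonneg (by linarith only [hjk]) (mul_nonneg hjr hlmb.le)
        have p3 : (0:ℝ) ≤ ((k:ℝ) - 1 - (j:ℝ)) * lmb := mul_nonneg hi hlmb.le
        linarith only [p1, p2, p3, hlmb.le]
      have hE : D ^ ℓ ≤ ((k:ℝ) - 1 - (j:ℝ) + 2) ^ ℓ * (L + (j:ℝ) * lmb) ^ ℓ := by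
        rw [← Real.mul_rpow (by linarith only [hi]) hEpos.le]
        exact Real.rpow_le_rpow hDpos.le hDle hℓ
      have hpoly : ((k:ℝ) - 1 - (j:ℝ) + 2) ^ ℓ
          ≤ Real.exp (ℓ * ((k:ℝ) - 1 - (j:ℝ) + 2)) := by
        rw [Real.rpow_def_of_pos (by linarith only [hi])]
        apply Real.exp_le_exp.mpr
        have hlog := Real.log_le_sub_one_of_pos (show (0:ℝ) < (k:ℝ) - 1 - (j:ℝ) + 2 by linarith only [hi])
        have := mul_nonneg hℓ
          (by linarith only [hlog] : (0:ℝ) ≤ ((k:ℝ) - 1 - (j:ℝ) + 2) - Real.log ((k:ℝ) - 1 - (j:ℝ) + 2))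
        linarith only [this]
      have hgeo : τ ^ (((k:ℝ) - 1 - (j:ℝ)) * δ) * Real.exp (ℓ * ((k:ℝ) - 1 - (j:ℝ) + 2))
          ≤ Real.exp (2 * ℓ) * (1/2 : ℝ) ^ ((k:ℝ) - 1 - (j:ℝ)) := by
        have h1 : τ ^ (((k:ℝ) - 1 - (j:ℝ)) * δ) = (τ ^ δ) ^ ((k:ℝ) - 1 - (j:ℝ)) := by
          rw [mul_comm, Real.rpow_mul hτpos.le]
        have h2 : Real.exp (ℓ * ((k:ℝ) - 1 - (j:ℝ) + 2))
            = Real.exp (2 * ℓ) * (Real.exp ℓ) ^ ((k:ℝ) - 1 - (j:ℝ)) := by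
          rw [show ℓ * ((k:ℝ) - 1 - (j:ℝ) + 2) = 2 * ℓ + ℓ * ((k:ℝ) - 1 - (j:ℝ)) by ring,
            Real.exp_add, Real.exp_mul, Real.exp_mul]
        rw [h1, h2]
        have h3 : (τ ^ δ) ^ ((k:ℝ) - 1 - (j:ℝ)) * (Real.exp ℓ) ^ ((k:ℝ) - 1 - (j:ℝ))
            = (τ ^ δ * Real.exp ℓ) ^ ((k:ℝ) - 1 - (j:ℝ)) :=
          (Real.mul_rpow (Real.rpow_nonneg hτpos.le δ) (Real.exp_nonneg ℓ)).symm
        calc (τ ^ δ) ^ ((k:ℝ) - 1 - (j:ℝ)) *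
              (Real.exp (2 * ℓ) * (Real.exp ℓ) ^ ((k:ℝ) - 1 - (j:ℝ)))
            = Real.exp (2 * ℓ) * ((τ ^ δ * Real.exp ℓ) ^ ((k:ℝ) - 1 - (j:ℝ))) := by
              rw [← h3]; ring
          _ ≤ Real.exp (2 * ℓ) * (1/2 : ℝ) ^ ((k:ℝ) - 1 - (j:ℝ)) := by
              apply mul_le_mul_of_nonneg_left _ (Real.exp_nonneg _)
              apply Real.rpow_le_rpow (by positivity) (by linarith only [hexpτ]) hi
      -- combine
      have hfrac : τ ^ (((k:ℝ) - 1 - (j:ℝ)) * δ) / (L + (j:ℝ) * lmb) ^ ℓ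
          ≤ Real.exp (2 * ℓ) * (1/2 : ℝ) ^ ((k:ℝ) - 1 - (j:ℝ)) / D ^ ℓ := by
        rw [div_le_div_iff₀ hEℓpos hDℓpos]
        have hτnn := Real.rpow_nonneg hτpos.le (((k:ℝ) - 1 - (j:ℝ)) * δ)
        calc τ ^ (((k:ℝ) - 1 - (j:ℝ)) * δ) * D ^ ℓ
            ≤ τ ^ (((k:ℝ) - 1 - (j:ℝ)) * δ) *
              (((k:ℝ) - 1 - (j:ℝ) + 2) ^ ℓ * (L + (j:ℝ) * lmb) ^ ℓ) :=
              mul_le_mul_of_nonneg_left hE hτnn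
          _ = (τ ^ (((k:ℝ) - 1 - (j:ℝ)) * δ) * ((k:ℝ) - 1 - (j:ℝ) + 2) ^ ℓ) *
              (L + (j:ℝ) * lmb) ^ ℓ := by ring
          _ ≤ (τ ^ (((k:ℝ) - 1 - (j:ℝ)) * δ) * Real.exp (ℓ * ((k:ℝ) - 1 - (j:ℝ) + 2))) *
              (L + (j:ℝ) * lmb) ^ ℓ :=
              mul_le_mul_of_nonneg_right (mul_le_mul_of_nonneg_left hpoly hτnn) hEℓpos.le
          _ ≤ (Real.exp (2 * ℓ) * (1/2 : ℝ) ^ ((k:ℝ) - 1 - (j:ℝ))) * (L + (j:ℝ) * lmb) ^ ℓ :=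
              mul_le_mul_of_nonneg_right hgeo hEℓpos.le
      have eterm : τ ^ (((k:ℝ) - 1 - (j:ℝ)) * γ₀) * (B * (τ ^ j * R) ^ β / (L + (j:ℝ) * lmb) ^ ℓ)
          = (B * R ^ β * τ ^ (((k:ℝ) - 1) * β)) *
            (τ ^ (((k:ℝ) - 1 - (j:ℝ)) * δ) / (L + (j:ℝ) * lmb) ^ ℓ) := by
        rw [e1]
        calc τ ^ (((k:ℝ) - 1 - (j:ℝ)) * γ₀) *
              (B * (τ ^ ((j:ℝ) * β) * R ^ β) / (L + (j:ℝ) * lmb) ^ ℓ)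
            = (τ ^ (((k:ℝ) - 1 - (j:ℝ)) * γ₀) * τ ^ ((j:ℝ) * β)) *
              (B * R ^ β / (L + (j:ℝ) * lmb) ^ ℓ) := by ring
          _ = (τ ^ (((k:ℝ) - 1) * β) * τ ^ (((k:ℝ) - 1 - (j:ℝ)) * δ)) *
              (B * R ^ β / (L + (j:ℝ) * lmb) ^ ℓ) := by rw [e2]
          _ = _ := by ring
      have eC : C * (1/2 : ℝ) ^ ((k:ℝ) - 1 - (j:ℝ))
          = (B * R ^ β * τ ^ (((k:ℝ) - 1) * β)) *
            (Real.exp (2 * ℓ) * (1/2 : ℝ) ^ ((k:ℝ) - 1 - (j:ℝ)) / D ^ ℓ) := by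
        rw [hCdef]; ring
      rw [eterm, eC]
      exact mul_le_mul_of_nonneg_left hfrac (by positivity)
    calc ∑ j ∈ Finset.range k,
          τ ^ (((k : ℝ) - 1 - (j : ℝ)) * γ₀) * (B * (τ ^ j * R) ^ β / (L + (j : ℝ) * lmb) ^ ℓ)
        ≤ ∑ j ∈ Finset.range k, C * (1/2 : ℝ) ^ ((k : ℝ) - 1 - (j : ℝ)) :=
          Finset.sum_le_sum hterm
      _ = C * ∑ j ∈ Finset.range k, (1/2 : ℝ) ^ (k - 1 - j : ℕ) := by
          rw [← Finset.mul_sum]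
          congr 1
          refine Finset.sum_congr rfl fun j hj => ?_
          rw [Finset.mem_range] at hj
          rw [show (k:ℝ) - 1 - (j:ℝ) = ((k - 1 - j : ℕ) : ℝ) by
              rw [Nat.cast_sub (by omega), Nat.cast_sub (by omega : 1 ≤ k)]; push_cast; ring,
            Real.rpow_natCast]
      _ = C * ∑ j ∈ Finset.range k, (1/2 : ℝ) ^ j := by
          rw [Finset.sum_range_reflect (fun m => ((1:ℝ)/2) ^ m) k]
      _ ≤ C * 2 := mul_le_mul_of_nonneg_left (sum_geometric_two_le _) hCpos
      _ = 2 * Real.exp (2 * ℓ) * B * (τ ^ (((k : ℝ) - 1) * β) * R ^ β) / D ^ ℓ := by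
          rw [hCdef]; ring
  -- choose k
  have hex : ∃ n : ℕ, τ ^ n * R < ρ := by
    obtain ⟨n, hn⟩ := exists_pow_lt_of_lt_one (div_pos hρ hR) hτ1
    exact ⟨n, (lt_div_iff₀ hR).mp hn⟩
  have hm0 : Nat.find hex ≠ 0 := by
    intro h
    have hmspec : τ ^ Nat.find hex * R < ρ := Nat.find_spec hex
    rw [h, pow_zero, one_mul] at hmspec
    exact absurd hmspec (not_lt.mpr hρR)
  obtain ⟨k, hkm⟩ := Nat.exists_eq_succ_of_ne_zero hm0
  have hk2 : ρ ≤ τ ^ k * R := by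
    have h1 : k < Nat.find hex := by omega
    exact not_lt.mp (Nat.find_min hex h1)
  have hk1 : τ ^ (k + 1) * R < ρ := by
    have hmspec : τ ^ Nat.find hex * R < ρ := Nat.find_spec hex
    rw [hkm] at hmspec; exact hmspec
  clear hm0 hkm hex
  have hφR : 0 ≤ φ R := hφ0 R hR hRR₀
  have hRβL : 0 ≤ R ^ β / L ^ ℓ := by positivity
  have hMlog0 : 0 ≤ Real.log (τ ^ 2 * R₀ / ρ) := by
    apply Real.log_nonneg
    rw [le_div_iff₀ hρ]
    have h9 : ρ ≤ τ ^ 2 * R₀ := le_trans hρR hRle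
    linarith
  have hlast : 0 ≤ c * ρ ^ β / (Real.log (τ ^ 2 * R₀ / ρ)) ^ ℓ :=
    div_nonneg (by positivity) (Real.rpow_nonneg hMlog0 ℓ)
  have hrR0 : 0 ≤ ρ / R := by positivity
  have hrR1 : ρ / R ≤ 1 := by rw [div_le_one hR]; exact hρR
  rcases Nat.eq_zero_or_pos k with hk0 | hkpos
  · -- case k = 0 : τ R < ρ ≤ R
    subst hk0
    have hτρ : τ * R < ρ := by rw [pow_one] at hk1; exact hk1
    have h1 : τ ≤ ρ / R := by rw [le_div_iff₀ hR]; linarith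
    have h2 : τ ^ γ₀ ≤ (ρ / R) ^ γ₀ := Real.rpow_le_rpow hτpos.le h1 hγ₀pos.le
    have h3 : 1 ≤ τ ^ (-γ₀) * (ρ / R) ^ γ₀ := by
      have he : τ ^ (-γ₀) * τ ^ γ₀ = 1 := by
        rw [← Real.rpow_add hτpos]; norm_num
      calc (1:ℝ) = τ ^ (-γ₀) * τ ^ γ₀ := he.symm
        _ ≤ _ := mul_le_mul_of_nonneg_left h2 (Real.rpow_nonneg hτpos.le _)
    calc φ ρ ≤ φ R := hφmono ρ R hρ hρR hRR₀
      _ ≤ (τ ^ (-γ₀) * (ρ / R) ^ γ₀) * φ R := le_mul_of_one_le_left hφR h3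
      _ ≤ (c * (ρ / R) ^ γ₀) * φ R :=
          mul_le_mul_of_nonneg_right
            (mul_le_mul_of_nonneg_right hcγ (Real.rpow_nonneg hrR0 _)) hφR
      _ ≤ c * (ρ / R) ^ γ₀ * (φ R + R ^ β / L ^ ℓ) := by
          apply mul_le_mul_of_nonneg_left (le_add_of_nonneg_right hRβL)
          positivity
      _ ≤ _ := le_add_of_nonneg_right hlast
  · -- case k ≥ 1
    have hkR : (1:ℝ) ≤ (k:ℝ) := by exact_mod_cast hkpos
    set M : ℝ := Real.log (τ ^ 2 * R₀ / ρ) with hMdef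
    have hDofk : lmb ≤ L + ((k:ℝ) - 2) * lmb := by
      have := mul_nonneg (by linarith only [hkR] : (0:ℝ) ≤ (k:ℝ) - 1) hlmb.le
      linarith only [this, hLlam, hlmb]
    have hDpos : 0 < L + ((k:ℝ) - 2) * lmb := lt_of_lt_of_le hlmb hDofk
    have hτk1 : τ ^ k ≤ 1 := pow_le_one₀ hτpos.le hτ1.le
    have h9 : τ ^ k * R ≤ 1 * R := mul_le_mul_of_nonneg_right hτk1 hR.le
    have hτkR₀ : τ ^ k * R ≤ R₀ := by rw [one_mul] at h9; linarith only [h9, hRR₀]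
    have h0 : φ ρ ≤ φ (τ ^ k * R) := hφmono _ _ hρ hk2 hτkR₀
    have hb1 : τ ^ (k + 1) ≤ ρ / R := by rw [le_div_iff₀ hR]; exact hk1.le
    -- first term
    have e3 : τ ^ ((k:ℝ) * γ₀) = (τ ^ (k + 1)) ^ γ₀ * τ ^ (-γ₀) := by
      rw [← Real.rpow_natCast τ (k + 1), ← Real.rpow_mul hτpos.le, ← Real.rpow_add hτpos]
      congr 1; push_cast; ring
    have T1 : τ ^ ((k:ℝ) * γ₀) * φ R ≤ c * (ρ / R) ^ γ₀ * (φ R + R ^ β / L ^ ℓ) := by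
      have h4 : (τ ^ (k + 1)) ^ γ₀ ≤ (ρ / R) ^ γ₀ :=
        Real.rpow_le_rpow (by positivity) hb1 hγ₀pos.le
      have h5 : τ ^ ((k:ℝ) * γ₀) ≤ (ρ / R) ^ γ₀ * τ ^ (-γ₀) := by
        rw [e3]
        exact mul_le_mul_of_nonneg_right h4 (Real.rpow_nonneg hτpos.le _)
      calc τ ^ ((k:ℝ) * γ₀) * φ R ≤ ((ρ / R) ^ γ₀ * τ ^ (-γ₀)) * φ R :=
            mul_le_mul_of_nonneg_right h5 hφR
        _ ≤ ((ρ / R) ^ γ₀ * c) * φ R :=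
            mul_le_mul_of_nonneg_right
              (mul_le_mul_of_nonneg_left hcγ (Real.rpow_nonneg hrR0 _)) hφR
        _ = c * (ρ / R) ^ γ₀ * φ R := by ring
        _ ≤ c * (ρ / R) ^ γ₀ * (φ R + R ^ β / L ^ ℓ) := by
            apply mul_le_mul_of_nonneg_left (le_add_of_nonneg_right hRβL)
            positivity
    -- second term
    have h10 : τ ^ k ≤ τ := by
      simpa using pow_le_pow_of_le_one hτpos.le hτ1.le hkpos
    have h11 : τ ^ k * R ≤ τ * R := mul_le_mul_of_nonneg_right h10 hR.le
    have h12 : τ * R ≤ τ * (τ ^ 2 * R₀) := mul_le_mul_of_nonneg_left hRle hτpos.le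
    have h13 : τ * (τ ^ 2 * R₀) < 1 * (τ ^ 2 * R₀) :=
      mul_lt_mul_of_pos_right hτ1 (by positivity)
    have hρM : ρ < τ ^ 2 * R₀ := by
      rw [one_mul] at h13; linarith only [hk2, h11, h12, h13]
    have hMpos : 0 < M := by
      rw [hMdef]; exact Real.log_pos ((one_lt_div hρ).mpr hρM)
    have hMℓpos : 0 < M ^ ℓ := Real.rpow_pos_of_pos hMpos ℓ
    have hDℓpos : 0 < (L + ((k:ℝ) - 2) * lmb) ^ ℓ := Real.rpow_pos_of_pos hDpos ℓ
    have e5 : Real.log (τ ^ 2 * R₀ / (τ ^ (k + 1) * R)) = L + ((k:ℝ) - 1) * lmb := by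
      rw [Real.log_div (by positivity) (by positivity),
        Real.log_mul (by positivity) hR₀.ne', Real.log_mul (by positivity) hR.ne',
        Real.log_pow, Real.log_pow, hLdef, Real.log_div hR₀.ne' hR.ne', hlmbdef]
      push_cast; ring
    have h14 : τ ^ 2 * R₀ / ρ ≤ τ ^ 2 * R₀ / (τ ^ (k + 1) * R) := by
      rw [div_le_div_iff₀ hρ (by positivity)]
      exact mul_le_mul_of_nonneg_left hk1.le (by positivity)
    have hMD : M ≤ 2 * (L + ((k:ℝ) - 2) * lmb) := by
      have h15 : M ≤ L + ((k:ℝ) - 1) * lmb := by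
        rw [hMdef, ← e5]; exact Real.log_le_log (by positivity) h14
      linarith only [h15, hDofk]
    have h7 : M ^ ℓ ≤ 2 ^ ℓ * (L + ((k:ℝ) - 2) * lmb) ^ ℓ := by
      rw [← Real.mul_rpow (by norm_num) hDpos.le]
      exact Real.rpow_le_rpow hMpos.le hMD hℓ
    have e4 : τ ^ (((k:ℝ) - 1) * β) = (τ ^ (k + 1)) ^ β * τ ^ (-(2 * β)) := by
      rw [← Real.rpow_natCast τ (k + 1), ← Real.rpow_mul hτpos.le, ← Real.rpow_add hτpos]
      congr 1; push_cast; ring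
    have h5b : (τ ^ (k + 1)) ^ β ≤ (ρ / R) ^ β :=
      Real.rpow_le_rpow (by positivity) hb1 hβ
    have h6 : (ρ / R) ^ β * R ^ β = ρ ^ β := by
      rw [← Real.mul_rpow hrR0 hR.le, div_mul_cancel₀ _ hR.ne']
    have ha : τ ^ (((k:ℝ) - 1) * β) * R ^ β ≤ τ ^ (-(2 * β)) * ρ ^ β := by
      rw [e4]
      calc (τ ^ (k + 1)) ^ β * τ ^ (-(2 * β)) * R ^ β
          ≤ (ρ / R) ^ β * τ ^ (-(2 * β)) * R ^ β :=
            mul_le_mul_of_nonneg_right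
              (mul_le_mul_of_nonneg_right h5b (Real.rpow_nonneg hτpos.le _))
              (Real.rpow_nonneg hR.le _)
        _ = τ ^ (-(2 * β)) * ((ρ / R) ^ β * R ^ β) := by ring
        _ = τ ^ (-(2 * β)) * ρ ^ β := by rw [h6]
    have T2 : 2 * Real.exp (2 * ℓ) * B * (τ ^ (((k:ℝ) - 1) * β) * R ^ β) /
        (L + ((k:ℝ) - 2) * lmb) ^ ℓ ≤ c * ρ ^ β / M ^ ℓ := by
      have hYnn : (0:ℝ) ≤ 2 * Real.exp (2 * ℓ) * B := by positivity
      have s1 : 2 * Real.exp (2 * ℓ) * B * (τ ^ (((k:ℝ) - 1) * β) * R ^ β) /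
          (L + ((k:ℝ) - 2) * lmb) ^ ℓ
          ≤ 2 * Real.exp (2 * ℓ) * B * (τ ^ (-(2 * β)) * ρ ^ β) /
            (L + ((k:ℝ) - 2) * lmb) ^ ℓ :=
        (div_le_div_iff_of_pos_right hDℓpos).mpr (mul_le_mul_of_nonneg_left ha hYnn)
      have s2 : 2 * Real.exp (2 * ℓ) * B * (τ ^ (-(2 * β)) * ρ ^ β) /
          (L + ((k:ℝ) - 2) * lmb) ^ ℓ
          ≤ (2 * 2 ^ ℓ * Real.exp (2 * ℓ) * B * τ ^ (-(2 * β))) * ρ ^ β / M ^ ℓ := by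
        rw [div_le_div_iff₀ hDℓpos hMℓpos]
        calc 2 * Real.exp (2 * ℓ) * B * (τ ^ (-(2 * β)) * ρ ^ β) * M ^ ℓ
            ≤ 2 * Real.exp (2 * ℓ) * B * (τ ^ (-(2 * β)) * ρ ^ β) *
              (2 ^ ℓ * (L + ((k:ℝ) - 2) * lmb) ^ ℓ) :=
              mul_le_mul_of_nonneg_left h7 (by positivity)
          _ = (2 * 2 ^ ℓ * Real.exp (2 * ℓ) * B * τ ^ (-(2 * β))) * ρ ^ β *
              (L + ((k:ℝ) - 2) * lmb) ^ ℓ := by ring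
      have s3 : (2 * 2 ^ ℓ * Real.exp (2 * ℓ) * B * τ ^ (-(2 * β))) * ρ ^ β / M ^ ℓ
          ≤ c * ρ ^ β / M ^ ℓ :=
        (div_le_div_iff_of_pos_right hMℓpos).mpr
          (mul_le_mul_of_nonneg_right hcB (Real.rpow_nonneg hρ.le β))
      linarith only [s1, s2, s3]
    calc φ ρ ≤ φ (τ ^ k * R) := h0
      _ ≤ τ ^ ((k:ℝ) * γ₀) * φ R + ∑ j ∈ Finset.range k,
            τ ^ (((k : ℝ) - 1 - (j : ℝ)) * γ₀) *
              (B * (τ ^ j * R) ^ β / (L + (j : ℝ) * lmb) ^ ℓ) := key k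
      _ ≤ τ ^ ((k:ℝ) * γ₀) * φ R + 2 * Real.exp (2 * ℓ) * B *
            (τ ^ (((k : ℝ) - 1) * β) * R ^ β) / (L + ((k : ℝ) - 2) * lmb) ^ ℓ := by
          have := sumbd k hkpos
          linarith only [this]
      _ ≤ c * (ρ / R) ^ γ₀ * (φ R + R ^ β / L ^ ℓ) + c * ρ ^ β / M ^ ℓ :=
          add_le_add T1 T2
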